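/- Let a, b be natural numbers with a + 2b ≥ 1, set r = a + 2b, and let s be a real number with s > 0. Then the function (x, y) ↦ (‖x‖⁴ + ‖y‖²)^((s − r)/4) on ℝᵃ × ℝᵇ is locally integrable with respect to Lebesgue measure (in particular it is integrable on the unit ball around the origin). -/

import Mathlib

open MeasureTheory Metric Set

lemma aux_nontrivial {n : ℕ} (hn : 0 < n) : Nontrivial (EuclideanSpace ℝ (Fin n)) := by
  have : Nonempty (Fin n) := ⟨⟨0, hn⟩⟩
  refine ⟨0, EuclideanSpace.single ⟨0, hn⟩ 1, fun h => ?_⟩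
  have := congrArg (fun v : EuclideanSpace ℝ (Fin n) => v ⟨0, hn⟩) h.symm
  simp [EuclideanSpace.single] at this

lemma aux_int {n : ℕ} {c : ℝ} (hc0 : 0 ≤ c) (hcn : c < n) :
    IntegrableOn (fun x : EuclideanSpace ℝ (Fin n) => ‖x‖ ^ (-c))
      (Metric.ball 0 1) volume := by
  have hnpos : 0 < n := by exact_mod_cast hc0.trans_lt hcn
  haveI := aux_nontrivial hnpos
  set B := volume (Metric.ball (0 : EuclideanSpace ℝ (Fin n)) 1) with hBdef
  have hB : B ≠ ⊤ := measure_ball_lt_top.ne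
  set u : ℝ := 1/2 with hu
  have hu0 : (0:ℝ) < u := by norm_num [hu]
  have hu1 : u < 1 := by norm_num [hu]
  set σ : ℝ := u ^ ((n:ℝ) - c) with hσdef
  have hσ0 : 0 ≤ σ := Real.rpow_nonneg hu0.le _
  have hσ1 : σ < 1 := Real.rpow_lt_one hu0.le hu1 (by linarith)
  set A : ℕ → Set (EuclideanSpace ℝ (Fin n)) := fun k => Metric.ball 0 (u ^ k) \ Metric.ball 0 (u ^ (k+1)) with hAdef
  constructor
  · exact (Measurable.aestronglyMeasurable (by fun_prop))
  rw [hasFiniteIntegral_iff_ofReal]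
  swap
  · exact Filter.Eventually.of_forall fun x => Real.rpow_nonneg (norm_nonneg _) _
  -- covering
  have hcov : Metric.ball (0 : EuclideanSpace ℝ (Fin n)) 1 ⊆ insert 0 (⋃ k, A k) := by
    intro x hx
    rcases eq_or_ne x 0 with rfl | hx0
    · exact mem_insert _ _
    · refine mem_insert_of_mem _ ?_
      have hxpos : 0 < ‖x‖ := norm_pos_iff.2 hx0
      have hex : ∃ k : ℕ, u ^ (k+1) ≤ ‖x‖ := by
        obtain ⟨m, hm⟩ := exists_pow_lt_of_lt_one hxpos hu1
        exact ⟨m, by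
          calc u ^ (m+1) ≤ u ^ m := pow_le_pow_of_le_one hu0.le hu1.le (by omega)
          _ ≤ ‖x‖ := hm.le⟩
      classical
      set k := Nat.find hex with hk
      refine mem_iUnion.2 ⟨k, ?_, ?_⟩
      · -- ‖x‖ < u ^ k
        simp only [Metric.mem_ball, dist_zero_right]
        rcases Nat.eq_zero_or_pos k with hk0 | hkpos
        · rw [hk0]; simpa using (mem_ball_zero_iff.1 hx)
        · have := Nat.find_min hex (m := k - 1) (by omega)
          push_neg at this
          have hkk : k - 1 + 1 = k := by omega
          rwa [hkk] at this
      · simp only [Metric.mem_ball, dist_zero_right, not_lt]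
        exact Nat.find_spec hex
  calc ∫⁻ x in Metric.ball (0 : EuclideanSpace ℝ (Fin n)) 1, ENNReal.ofReal (‖x‖ ^ (-c)) ∂volume
      ≤ ∫⁻ x in insert 0 (⋃ k, A k), ENNReal.ofReal (‖x‖ ^ (-c)) ∂volume :=
        lintegral_mono_set hcov
    _ ≤ ∫⁻ x in ({0} : Set (EuclideanSpace ℝ (Fin n))), ENNReal.ofReal (‖x‖ ^ (-c)) ∂volume
        + ∫⁻ x in ⋃ k, A k, ENNReal.ofReal (‖x‖ ^ (-c)) ∂volume := by
        rw [insert_eq]; exact lintegral_union_le _ _ _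
    _ = ∫⁻ x in ⋃ k, A k, ENNReal.ofReal (‖x‖ ^ (-c)) ∂volume := by
        rw [Measure.restrict_eq_zero.2 (measure_singleton 0), lintegral_zero_measure, zero_add]
    _ ≤ ∑' k, ∫⁻ x in A k, ENNReal.ofReal (‖x‖ ^ (-c)) ∂volume := lintegral_iUnion_le _ _
    _ ≤ ∑' k : ℕ, (ENNReal.ofReal (u ^ (-c)) * B) * (ENNReal.ofReal σ) ^ k := by
        refine ENNReal.tsum_le_tsum fun k => ?_
        have step1 : ∫⁻ x in A k, ENNReal.ofReal (‖x‖ ^ (-c)) ∂volume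
            ≤ ∫⁻ _ in A k, ENNReal.ofReal ((u ^ (k+1)) ^ (-c)) ∂volume := by
          refine setLIntegral_mono measurable_const fun x hx => ?_
          refine ENNReal.ofReal_le_ofReal ?_
          refine Real.rpow_le_rpow_of_nonpos (pow_pos hu0 _) ?_ (neg_nonpos.2 hc0)
          have := hx.2
          simpa only [Metric.mem_ball, dist_zero_right, not_lt] using this
        have step2 : volume (A k) ≤ ENNReal.ofReal ((u ^ k) ^ n) * B := by
          refine le_trans (measure_mono diff_subset) ?_
          rw [hBdef, Measure.addHaar_ball_of_pos volume (0 : EuclideanSpace ℝ (Fin n)) (pow_pos hu0 k),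
            finrank_euclideanSpace_fin]
        calc ∫⁻ x in A k, ENNReal.ofReal (‖x‖ ^ (-c)) ∂volume
            ≤ ENNReal.ofReal ((u ^ (k+1)) ^ (-c)) * volume (A k) := by
              rw [← setLIntegral_const]; exact step1
          _ ≤ ENNReal.ofReal ((u ^ (k+1)) ^ (-c)) * (ENNReal.ofReal ((u ^ k) ^ n) * B) :=
              mul_le_mul_right step2 _
          _ = (ENNReal.ofReal (u ^ (-c)) * B) * (ENNReal.ofReal σ) ^ k := by
              have hreal : ((u ^ (k+1) : ℝ)) ^ (-c) * (u ^ k) ^ n = u ^ (-c) * σ ^ k := by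
                rw [hσdef, ← Real.rpow_natCast u (k+1), ← Real.rpow_mul hu0.le, ← pow_mul,
                  ← Real.rpow_natCast u (k*n), ← Real.rpow_natCast (u ^ ((n:ℝ) - c)) k,
                  ← Real.rpow_mul hu0.le, ← Real.rpow_add hu0, ← Real.rpow_add hu0]
                congr 1
                push_cast
                ring
              rw [← mul_assoc, ← ENNReal.ofReal_mul (by positivity), hreal,
                ENNReal.ofReal_mul (by positivity), ENNReal.ofReal_pow hσ0]
              ring
    _ < ⊤ := by
        rw [ENNReal.tsum_mul_left, ENNReal.tsum_geometric]
        refine ENNReal.mul_lt_top (ENNReal.mul_lt_top ENNReal.ofReal_lt_top hB.lt_top) ?_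
        have : ENNReal.ofReal σ < 1 := ENNReal.ofReal_lt_one.2 hσ1
        exact ENNReal.inv_lt_top.2 (tsub_pos_of_lt this)


set_option maxHeartbeats 1000000 in
/-- Lemma 1.1 (first half): for `r = a + 2b` the homogeneous dimension of
`V = ℝᵃ × ℝᵇ` and `s > 0`, the gauge power `N(x,y)^(s-r) = (‖x‖⁴ + ‖y‖²)^((s-r)/4)`
is locally integrable; in particular it is integrable on the unit ball. -/
theorem stmt0 (a b : ℕ) (hab : 1 ≤ a + 2 * b) (s : ℝ) (hs : 0 < s) :
    LocallyIntegrable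
      (fun p : EuclideanSpace ℝ (Fin a) × EuclideanSpace ℝ (Fin b) =>
        (‖p.1‖ ^ 4 + ‖p.2‖ ^ 2) ^ ((s - (a + 2 * b : ℕ)) / 4)) volume ∧
    IntegrableOn
      (fun p : EuclideanSpace ℝ (Fin a) × EuclideanSpace ℝ (Fin b) =>
        (‖p.1‖ ^ 4 + ‖p.2‖ ^ 2) ^ ((s - (a + 2 * b : ℕ)) / 4))
      (Metric.ball 0 1) volume := by
  have hR1 : (1:ℝ) ≤ ((a + 2*b : ℕ) : ℝ) := by exact_mod_cast hab
  have hR0 : (0:ℝ) < ((a + 2*b : ℕ) : ℝ) := by linarith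
  set R : ℝ := ((a + 2*b : ℕ) : ℝ) with hRdef
  set e : ℝ := (s - R)/4 with hedef
  set f : EuclideanSpace ℝ (Fin a) × EuclideanSpace ℝ (Fin b) → ℝ :=
    fun p => (‖p.1‖ ^ 4 + ‖p.2‖ ^ 2) ^ e with hfdef
  have hbasepos : ∀ q : EuclideanSpace ℝ (Fin a) × EuclideanSpace ℝ (Fin b),
      q ≠ 0 → 0 < ‖q.1‖ ^ 4 + ‖q.2‖ ^ 2 := by
    intro q hq
    have : q.1 ≠ 0 ∨ q.2 ≠ 0 := by
      by_contra h
      push_neg at h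
      exact hq (Prod.ext h.1 h.2)
    rcases this with h | h
    · have : (0:ℝ) < ‖q.1‖ ^ 4 := pow_pos (norm_pos_iff.2 h) 4
      positivity
    · have : (0:ℝ) < ‖q.2‖ ^ 2 := pow_pos (norm_pos_iff.2 h) 2
      positivity
  have hmeasf : Measurable f := by
    rw [hfdef]
    fun_prop
  have I1 : IntegrableOn f (Metric.ball 0 1) volume := by
    rcases le_or_gt R s with hsR | hsR
    · -- nonnegative exponent: continuous function
      have he : 0 ≤ e := by rw [hedef]; linarith
      have hcont : Continuous f := by
        rw [hfdef]
        exact Continuous.rpow_const (by fun_prop) fun p => Or.inr he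
      exact (hcont.locallyIntegrable.integrableOn_isCompact (isCompact_closedBall 0 1)).mono_set
        Metric.ball_subset_closedBall
    · -- singular case
      have he : e ≤ 0 := by rw [hedef]; linarith
      set pp : ℝ := a * (R - s) / R with hppdef
      set qq : ℝ := b * (R - s) / R with hqqdef
      have hpp0 : 0 ≤ pp := div_nonneg (mul_nonneg (Nat.cast_nonneg a) (by linarith)) hR0.le
      have hqq0 : 0 ≤ qq := div_nonneg (mul_nonneg (Nat.cast_nonneg b) (by linarith)) hR0.le
      have hg1 : IntegrableOn (fun x : EuclideanSpace ℝ (Fin a) => ‖x‖ ^ (-pp))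
          (Metric.ball 0 1) volume := by
        rcases Nat.eq_zero_or_pos a with ha | ha
        · have hpz : pp = 0 := by rw [hppdef, ha]; push_cast; ring
          rw [hpz]
          simp only [neg_zero, Real.rpow_zero]
          exact integrableOn_const measure_ball_lt_top.ne
        · apply aux_int hpp0
          rw [hppdef, div_lt_iff₀ hR0]
          have haR : (0:ℝ) < (a:ℝ) := by exact_mod_cast ha
          nlinarith
      have hg2 : IntegrableOn (fun y : EuclideanSpace ℝ (Fin b) => ‖y‖ ^ (-qq))
          (Metric.ball 0 1) volume := by
        rcases Nat.eq_zero_or_pos b with hb | hb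
        · have hqz : qq = 0 := by rw [hqqdef, hb]; push_cast; ring
          rw [hqz]
          simp only [neg_zero, Real.rpow_zero]
          exact integrableOn_const measure_ball_lt_top.ne
        · apply aux_int hqq0
          rw [hqqdef, div_lt_iff₀ hR0]
          have hbR : (0:ℝ) < (b:ℝ) := by exact_mod_cast hb
          nlinarith
      have hgprod : IntegrableOn
          (fun p : EuclideanSpace ℝ (Fin a) × EuclideanSpace ℝ (Fin b) =>
            ‖p.1‖ ^ (-pp) * ‖p.2‖ ^ (-qq)) (Metric.ball 0 1) volume := by
        have h00 : (0 : EuclideanSpace ℝ (Fin a) × EuclideanSpace ℝ (Fin b))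
            = ((0 : EuclideanSpace ℝ (Fin a)), (0 : EuclideanSpace ℝ (Fin b))) := rfl
        rw [IntegrableOn, h00, ← ball_prod_same, Measure.volume_eq_prod, ← Measure.prod_restrict]
        exact Integrable.mul_prod hg1 hg2
      -- a.e. nonvanishing of each coordinate (when the factor is nontrivial)
      have haex : ∀ᵐ p : EuclideanSpace ℝ (Fin a) × EuclideanSpace ℝ (Fin b) ∂volume,
          a ≠ 0 → p.1 ≠ 0 := by
        rcases Nat.eq_zero_or_pos a with ha | ha
        · filter_upwards with p h
          exact absurd ha h
        · haveI := aux_nontrivial ha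
          have hnull : volume {p : EuclideanSpace ℝ (Fin a) × EuclideanSpace ℝ (Fin b) |
              p.1 = 0} = 0 := by
            have hset : {p : EuclideanSpace ℝ (Fin a) × EuclideanSpace ℝ (Fin b) | p.1 = 0}
                = ({0} : Set (EuclideanSpace ℝ (Fin a))) ×ˢ
                  (univ : Set (EuclideanSpace ℝ (Fin b))) := by
              ext p
              simp only [mem_setOf_eq, Set.mem_prod, mem_singleton_iff, mem_univ, and_true]
            rw [Measure.volume_eq_prod, hset, Measure.prod_prod, measure_singleton, zero_mul]
          rw [ae_iff]
          refine measure_mono_null (fun p hp => ?_) hnull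
          simp only [Classical.not_imp, not_not, mem_setOf_eq] at hp ⊢
          exact hp.2
      have haey : ∀ᵐ p : EuclideanSpace ℝ (Fin a) × EuclideanSpace ℝ (Fin b) ∂volume,
          b ≠ 0 → p.2 ≠ 0 := by
        rcases Nat.eq_zero_or_pos b with hb | hb
        · filter_upwards with p h
          exact absurd hb h
        · haveI := aux_nontrivial hb
          have hnull : volume {p : EuclideanSpace ℝ (Fin a) × EuclideanSpace ℝ (Fin b) |
              p.2 = 0} = 0 := by
            have hset : {p : EuclideanSpace ℝ (Fin a) × EuclideanSpace ℝ (Fin b) | p.2 = 0}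
                = (univ : Set (EuclideanSpace ℝ (Fin a))) ×ˢ
                  ({0} : Set (EuclideanSpace ℝ (Fin b))) := by
              ext p
              simp only [mem_setOf_eq, Set.mem_prod, mem_singleton_iff, mem_univ, true_and]
            rw [Measure.volume_eq_prod, hset, Measure.prod_prod, measure_singleton, mul_zero]
          rw [ae_iff]
          refine measure_mono_null (fun p hp => ?_) hnull
          simp only [Classical.not_imp, not_not, mem_setOf_eq] at hp ⊢
          exact hp.2
      set θ : ℝ := (a : ℝ) / R with hθdef
      have hθ0 : 0 ≤ θ := div_nonneg (Nat.cast_nonneg a) hR0.le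
      have hθ1 : θ ≤ 1 := by
        rw [hθdef, div_le_one hR0, hRdef]
        push_cast
        linarith [Nat.cast_nonneg (α := ℝ) b]
      have hbound : ∀ᵐ p : EuclideanSpace ℝ (Fin a) × EuclideanSpace ℝ (Fin b) ∂volume,
          ‖f p‖ ≤ ‖p.1‖ ^ (-pp) * ‖p.2‖ ^ (-qq) := by
        filter_upwards [haex, haey] with p hx hy
        set A : ℝ := ‖p.1‖ ^ 4 with hAdef
        set B : ℝ := ‖p.2‖ ^ 2 with hBdef
        have hA0 : 0 ≤ A := by positivity
        have hB0 : 0 ≤ B := by positivity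
        have hgm : A ^ θ * B ^ (1 - θ) ≤ A + B := by
          calc A ^ θ * B ^ (1 - θ) ≤ θ * A + (1 - θ) * B :=
                Real.geom_mean_le_arith_mean2_weighted hθ0 (by linarith) hA0 hB0 (by ring)
            _ ≤ A + B := by nlinarith
        have hApos : 0 < A ^ θ := by
          rcases Nat.eq_zero_or_pos a with ha | ha
          · have hθz : θ = 0 := by rw [hθdef, ha]; simp
            rw [hθz, Real.rpow_zero]; norm_num
          · have h1 : p.1 ≠ 0 := hx (by omega)
            exact Real.rpow_pos_of_pos (pow_pos (norm_pos_iff.2 h1) 4) θ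
        have hBpos : 0 < B ^ (1 - θ) := by
          rcases Nat.eq_zero_or_pos b with hb | hb
          · have hθz : 1 - θ = 0 := by
              have hRa : R = (a:ℝ) := by rw [hRdef, hb]; push_cast; ring
              rw [hθdef, hRa, div_self (by rw [← hRa]; exact hR0.ne'), sub_self]
            rw [hθz, Real.rpow_zero]; norm_num
          · have h2 : p.2 ≠ 0 := hy (by omega)
            exact Real.rpow_pos_of_pos (pow_pos (norm_pos_iff.2 h2) 2) (1 - θ)
        have hkey : (A + B) ^ e ≤ (A ^ θ * B ^ (1 - θ)) ^ e :=
          Real.rpow_le_rpow_of_nonpos (mul_pos hApos hBpos) hgm he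
        have hsplit : (A ^ θ * B ^ (1 - θ)) ^ e = ‖p.1‖ ^ (-pp) * ‖p.2‖ ^ (-qq) := by
          rw [Real.mul_rpow (Real.rpow_nonneg hA0 _) (Real.rpow_nonneg hB0 _),
            hAdef, hBdef, ← Real.rpow_natCast ‖p.1‖ 4, ← Real.rpow_natCast ‖p.2‖ 2,
            ← Real.rpow_mul (norm_nonneg _), ← Real.rpow_mul (norm_nonneg _),
            ← Real.rpow_mul (norm_nonneg _), ← Real.rpow_mul (norm_nonneg _)]
          congr 1
          · congr 1
            rw [hppdef, hθdef, hedef]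
            field_simp [hR0.ne']
            ring
          · congr 1
            have h1θ : 1 - θ = 2*(b:ℝ)/R := by
              rw [hθdef]
              rw [eq_div_iff hR0.ne', sub_mul, div_mul_cancel₀ _ hR0.ne', one_mul, hRdef]
              push_cast
              ring
            rw [h1θ, hqqdef, hedef]
            field_simp [hR0.ne']
            ring
        have hnorm : ‖f p‖ = (A + B) ^ e := by
          rw [hfdef]
          exact Real.norm_of_nonneg (Real.rpow_nonneg (by positivity) e)
        rw [hnorm, ← hsplit]
        exact hkey
      exact Integrable.mono' hgprod (hmeasf.aestronglyMeasurable.restrict)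
        (ae_restrict_of_ae hbound)
  have loc : LocallyIntegrable f volume := by
    intro z
    rcases eq_or_ne z 0 with rfl | hz
    · exact ⟨Metric.ball 0 1, Metric.ball_mem_nhds 0 one_pos, I1⟩
    · have hz2 : 0 < ‖z‖ := norm_pos_iff.2 hz
      refine ⟨Metric.closedBall z (‖z‖/2), Metric.closedBall_mem_nhds z (by positivity), ?_⟩
      apply ContinuousOn.integrableOn_compact (isCompact_closedBall _ _)
      intro q hq
      have hq0 : q ≠ 0 := by
        intro h
        rw [h, Metric.mem_closedBall, dist_zero_left] at hq
        linarith
      refine ContinuousAt.continuousWithinAt ?_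
      rw [hfdef]
      exact ContinuousAt.rpow_const (by fun_prop) (Or.inl (hbasepos q hq0).ne')
  exact ⟨loc, I1⟩
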